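/- A workflow net N is 1-sound if and only if: (a) the short-circuit net N_sc is bounded from the marking {i:1}; (b) N_sc is cyclic from {i:1} (every marking reachable from {i:1} in N_sc can reach {i:1} back); and (c) some transition t of N satisfies pre(t) = {i:1} (t consumes exactly one token from i and nothing else). -/
import Mathlib


/-- A Petri net over places `P` and transitions `T`, given by pre/post arc weights. -/
structure PetriNet (P T : Type) where
  pre : T → P → ℕ
  post : T → P → ℕ

namespace PetriNet

variable {P T : Type}

/-- Transition `t` is enabled in marking `m`. -/
def Enabled (N : PetriNet P T) (m : P → ℕ) (t : T) : Prop := ∀ p, N.pre t p ≤ m p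

/-- Firing transition `t` in `m` yields `m'`. -/
def Fire (N : PetriNet P T) (m : P → ℕ) (t : T) (m' : P → ℕ) : Prop :=
  N.Enabled m t ∧ ∀ p, m' p = m p - N.pre t p + N.post t p

def Step (N : PetriNet P T) (m m' : P → ℕ) : Prop := ∃ t, N.Fire m t m'

/-- Reachability `m →* m'`. -/
def Reach (N : PetriNet P T) : (P → ℕ) → (P → ℕ) → Prop := Relation.ReflTransGen N.Step

/-- Effect of a transition, as an integer vector. -/
def eff (N : PetriNet P T) (t : T) (p : P) : ℤ := (N.post t p : ℤ) - (N.pre t p : ℤ)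

def ZStep (N : PetriNet P T) (m m' : P → ℤ) : Prop := ∃ t, ∀ p, m' p = m p + N.eff t p

/-- Z-reachability: no enabledness constraint, markings range over ℤ. -/
def ZReach (N : PetriNet P T) : (P → ℤ) → (P → ℤ) → Prop := Relation.ReflTransGen N.ZStep

/-- Maximal arc weight `‖T‖`. -/
def maxW (N : PetriNet P T) [Fintype P] [Fintype T] : ℕ :=
  Finset.univ.sup fun t => Finset.univ.sup fun p => max (N.pre t p) (N.post t p)

/-- Edge relation of the underlying graph, on `P ⊕ T`. -/
def Edge (N : PetriNet P T) : (P ⊕ T) → (P ⊕ T) → Prop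
  | Sum.inl p, Sum.inr t => 0 < N.pre t p
  | Sum.inr t, Sum.inl p => 0 < N.post t p
  | _, _ => False

/-- `N` is bounded from marking `m`. -/
def BoundedFrom (N : PetriNet P T) (m : P → ℕ) : Prop :=
  ∃ b : ℕ, ∀ m', N.Reach m m' → ∀ p, m' p ≤ b

/-- `N` is cyclic from marking `m`. -/
def CyclicFrom (N : PetriNet P T) (m : P → ℕ) : Prop :=
  ∀ m', N.Reach m m' → N.Reach m' m

/-- Transition `t` is quasi-live from `m`. -/
def QuasiLiveT (N : PetriNet P T) (m : P → ℕ) (t : T) : Prop :=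
  ∃ m', N.Reach m m' ∧ N.Enabled m' t

/-- `N` is quasi-live from `m`. -/
def QuasiLiveFrom (N : PetriNet P T) (m : P → ℕ) : Prop :=
  ∀ t, N.QuasiLiveT m t

/-- Transition `t` is live from `m`. -/
def LiveT (N : PetriNet P T) (m : P → ℕ) (t : T) : Prop :=
  ∀ m', N.Reach m m' → N.QuasiLiveT m' t

end PetriNet

/-- A workflow net: a Petri net with initial place `ini`, final place `fin`,
no production into `ini`, no consumption from `fin`, and every node on a path
from `ini` to `fin` in the underlying graph. -/
structure WorkflowNet (P T : Type) extends PetriNet P T where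
  ini : P
  fin : P
  ini_ne_fin : ini ≠ fin
  no_prod_ini : ∀ t, post t ini = 0
  no_cons_fin : ∀ t, pre t fin = 0
  on_path : ∀ v : P ⊕ T,
    Relation.ReflTransGen toPetriNet.Edge (Sum.inl ini) v ∧
    Relation.ReflTransGen toPetriNet.Edge v (Sum.inl fin)

namespace WorkflowNet

variable {P T : Type}

/-- The marking `{i : k}`. -/
def iniM [DecidableEq P] (N : WorkflowNet P T) (k : ℕ) : P → ℕ :=
  fun p => if p = N.ini then k else 0

/-- The marking `{f : k}`. -/
def finM [DecidableEq P] (N : WorkflowNet P T) (k : ℕ) : P → ℕ :=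
  fun p => if p = N.fin then k else 0

/-- `N` is `k`-sound. -/
def KSound [DecidableEq P] (N : WorkflowNet P T) (k : ℕ) : Prop :=
  ∀ m, N.toPetriNet.Reach (N.iniM k) m → N.toPetriNet.Reach m (N.finM k)

/-- `N` is generalised sound. -/
def GeneralisedSound [DecidableEq P] (N : WorkflowNet P T) : Prop :=
  ∀ k : ℕ, 1 ≤ k → N.KSound k

/-- `N` is structurally sound. -/
def StructurallySound [DecidableEq P] (N : WorkflowNet P T) : Prop :=
  ∃ k : ℕ, 1 ≤ k ∧ N.KSound k

/-- All places of `N` are nonredundant. -/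
def Nonredundant [DecidableEq P] (N : WorkflowNet P T) : Prop :=
  ∀ p : P, ∃ (k : ℕ) (m : P → ℕ), N.toPetriNet.Reach (N.iniM k) m ∧ 0 < m p

/-- `N` is strongly `k`-sound. -/
def StronglyKSound [DecidableEq P] (N : WorkflowNet P T) (k : ℕ) : Prop :=
  ∀ m : P → ℕ,
    N.toPetriNet.ZReach (fun p => ((N.iniM k) p : ℤ)) (fun p => (m p : ℤ)) →
    N.toPetriNet.Reach m (N.finM k)

end WorkflowNet

/-- The short-circuit net of a workflow net: an extra transition moving one
token from the final place back to the initial place. -/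
def WorkflowNet.shortCircuit {P T : Type} [DecidableEq P]
    (N : WorkflowNet P T) : PetriNet P (T ⊕ Unit) where
  pre := fun t p => match t with
    | Sum.inl t => N.pre t p
    | Sum.inr _ => if p = N.fin then 1 else 0
  post := fun t p => match t with
    | Sum.inl t => N.post t p
    | Sum.inr _ => if p = N.ini then 1 else 0

section Aux

variable {P T : Type}

/-- Monotonicity of reachability: adding tokens everywhere preserves runs. -/
lemma PetriNet.reach_add (N : PetriNet P T) (r : P → ℕ) {m m' : P → ℕ}
    (h : N.Reach m m') : N.Reach (fun p => m p + r p) (fun p => m' p + r p) := by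
  induction h with
  | refl => exact Relation.ReflTransGen.refl
  | tail _ hbc ih =>
    obtain ⟨t, ht, he⟩ := hbc
    exact ih.tail ⟨t, fun p => le_trans (ht p) (Nat.le_add_right _ _), fun p => by
      have h1 := ht p; have h2 := he p; dsimp only; omega⟩

/-- Pumping: if `m →* m + r`, then `m →* m + k·r` for every `k`. -/
lemma PetriNet.reach_pump (N : PetriNet P T) {m r : P → ℕ}
    (h : N.Reach m (fun p => m p + r p)) (k : ℕ) :
    N.Reach m (fun p => m p + k * r p) := by
  induction k with
  | zero =>
      have : (fun p => m p + 0 * r p) = m := by funext p; simp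
      rw [this]; exact Relation.ReflTransGen.refl
  | succ k ih =>
      have h2 := N.reach_add (fun p => k * r p) h
      have : (fun p => m p + (k + 1) * r p)
          = fun p => (m p + r p) + k * r p := by funext p; ring
      rw [this]
      exact ih.trans h2

/-- Every transition of a workflow net has a nonempty preset. -/
lemma WorkflowNet.pre_pos (N : WorkflowNet P T) (t : T) : ∃ p, 0 < N.pre t p := by
  obtain ⟨h1, -⟩ := N.on_path (Sum.inr t)
  cases h1 with
  | tail _ hbc =>
      rename_i c _
      cases c with
      | inl p => exact ⟨p, hbc⟩
      | inr t' => exact absurd hbc (by simp [PetriNet.Edge])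

/-- In the short-circuit net (bounded from `{i:1}`), any reachable marking with a
token on `fin` equals `{f:1}`. -/
lemma WorkflowNet.fin_marking [DecidableEq P] (N : WorkflowNet P T)
    (hb : N.shortCircuit.BoundedFrom (N.iniM 1)) {m : P → ℕ}
    (hm : N.shortCircuit.Reach (N.iniM 1) m) (hf : 1 ≤ m N.fin) :
    m = N.finM 1 := by
  obtain ⟨b, hbnd⟩ := hb
  set m' : P → ℕ := fun p =>
    m p - (if p = N.fin then 1 else 0) + (if p = N.ini then 1 else 0) with hm'
  have hstep : N.shortCircuit.Step m m' := by
    refine ⟨Sum.inr (), fun p => ?_, fun p => rfl⟩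
    by_cases hp : p = N.fin
    · subst hp; simpa [WorkflowNet.shortCircuit] using hf
    · simp [WorkflowNet.shortCircuit, hp]
  have hreach' : N.shortCircuit.Reach (N.iniM 1) m' := hm.tail hstep
  set r : P → ℕ := fun p => m' p - N.iniM 1 p with hr
  have hge : ∀ p, N.iniM 1 p ≤ m' p := by
    intro p
    simp only [hm', WorkflowNet.iniM]
    by_cases hp : p = N.ini
    · simp [hp, N.ini_ne_fin]
    · simp [hp]
  have heq : m' = fun p => N.iniM 1 p + r p := by
    funext p; have := hge p; simp only [hr]; omega
  have hpump : ∀ k, N.shortCircuit.Reach (N.iniM 1) (fun p => N.iniM 1 p + k * r p) :=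
    N.shortCircuit.reach_pump (heq ▸ hreach')
  have hr0 : ∀ p, r p = 0 := by
    intro p
    by_contra hpos
    have h1 : 1 ≤ r p := Nat.one_le_iff_ne_zero.mpr hpos
    have := hbnd _ (hpump (b + 1)) p
    have : N.iniM 1 p + (b + 1) * r p ≤ b := this
    nlinarith
  have hm'eq : m' = N.iniM 1 := by
    funext p; have := hge p; have := hr0 p; simp only [hr] at *; omega
  funext p
  have h2 : m' p = N.iniM 1 p := by rw [hm'eq]
  simp only [hm', WorkflowNet.iniM] at h2
  simp only [WorkflowNet.finM]
  by_cases hpf : p = N.fin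
  · have hpi : ¬ p = N.ini := by rw [hpf]; exact fun h => N.ini_ne_fin h.symm
    rw [if_pos hpf]
    rw [if_pos hpf, if_neg hpi] at h2
    subst hpf
    omega
  · rw [if_neg hpf]
    rw [if_neg hpf] at h2
    by_cases hpi : p = N.ini
    · rw [if_pos hpi] at h2; omega
    · rw [if_neg hpi] at h2; omega

/-- Along a run of the short-circuit net, either the token count on `ini` does
not increase, or some intermediate marking has a token on `fin`. -/
lemma WorkflowNet.ini_mono [DecidableEq P] (N : WorkflowNet P T) {m m' : P → ℕ}
    (h : N.shortCircuit.Reach m m') :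
    m' N.ini ≤ m N.ini ∨
      ∃ m'', N.shortCircuit.Reach m m'' ∧ 1 ≤ m'' N.fin := by
  induction h using Relation.ReflTransGen.head_induction_on with
  | refl => exact Or.inl le_rfl
  | head hab _ ih =>
      rename_i a c _
      obtain ⟨t, ht, he⟩ := hab
      cases t with
      | inl t =>
          have hc : c N.ini ≤ a N.ini := by
            have := he N.ini
            simp only [WorkflowNet.shortCircuit, N.no_prod_ini] at this
            omega
          rcases ih with h1 | ⟨m'', hr, hf⟩
          · exact Or.inl (le_trans h1 hc)
          · exact Or.inr ⟨m'', Relation.ReflTransGen.head ⟨Sum.inl t, ht, he⟩ hr, hf⟩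
      | inr u =>
          have : 1 ≤ a N.fin := by
            have := ht N.fin
            simpa [WorkflowNet.shortCircuit] using this
          exact Or.inr ⟨a, Relation.ReflTransGen.refl, this⟩

end Aux

/-- Characterization of 1-soundness via the short-circuit net. -/
theorem one_sound_iff_bounded_cyclic {P T : Type} [DecidableEq P]
    (N : WorkflowNet P T)
    (hchar : N.KSound 1 ↔
      N.shortCircuit.BoundedFrom (N.iniM 1) ∧
      N.shortCircuit.LiveT (N.iniM 1) (Sum.inr ())) :
    N.KSound 1 ↔
      N.shortCircuit.BoundedFrom (N.iniM 1) ∧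
      N.shortCircuit.CyclicFrom (N.iniM 1) ∧
      ∃ t : T, (∀ p, N.pre t p = N.iniM 1 p) := by
  constructor
  · intro hs
    obtain ⟨hb, hl⟩ := hchar.mp hs
    refine ⟨hb, ?_, ?_⟩
    · -- cyclicity
      intro m hm
      obtain ⟨m'', hmm'', hen⟩ := hl m hm
      have hf : 1 ≤ m'' N.fin := by
        have := hen N.fin
        simpa [WorkflowNet.shortCircuit] using this
      have hm'' : m'' = N.finM 1 := N.fin_marking hb (hm.trans hmm'') hf
      have hstep : N.shortCircuit.Step (N.finM 1) (N.iniM 1) := by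
        refine ⟨Sum.inr (), fun p => ?_, fun p => ?_⟩
        · simp only [WorkflowNet.shortCircuit, WorkflowNet.finM]
          split <;> simp
        · simp only [WorkflowNet.shortCircuit, WorkflowNet.finM, WorkflowNet.iniM]
          by_cases hpi : p = N.ini
          · simp [hpi, N.ini_ne_fin]
          · by_cases hpf : p = N.fin <;> simp [hpi, hpf]
      exact (hmm''.trans (hm'' ▸ Relation.ReflTransGen.single hstep))
    · -- initial transition
      have hreach : N.toPetriNet.Reach (N.iniM 1) (N.finM 1) :=
        hs _ Relation.ReflTransGen.refl
      have hne : N.iniM 1 ≠ N.finM 1 := by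
        intro h
        have := congrFun h N.ini
        simp [WorkflowNet.iniM, WorkflowNet.finM, N.ini_ne_fin] at this
      rcases Relation.ReflTransGen.cases_head hreach with h | ⟨b, ⟨t, ht, -⟩, -⟩
      · exact absurd h hne
      · refine ⟨t, fun p => ?_⟩
        obtain ⟨q, hq⟩ := N.pre_pos t
        have hq' : q = N.ini := by
          by_contra hqne
          have := ht q
          simp [WorkflowNet.iniM, hqne] at this
          omega
        have hti : N.pre t N.ini = 1 := by
          have := ht N.ini
          simp [WorkflowNet.iniM] at this
          rw [hq'] at hq
          omega
        by_cases hp : p = N.ini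
        · simp [hp, WorkflowNet.iniM, hti]
        · have := ht p
          simp [WorkflowNet.iniM, hp] at this ⊢
          omega
  · rintro ⟨hb, hc, t, ht⟩
    refine hchar.mpr ⟨hb, ?_⟩
    intro m hm
    -- from m go back to iniM 1, fire t, then a fin-token must appear
    have hcyc : N.shortCircuit.Reach m (N.iniM 1) := hc m hm
    set m1 : P → ℕ := fun p => N.iniM 1 p - N.pre t p + N.post t p with hm1
    have hstep : N.shortCircuit.Step (N.iniM 1) m1 :=
      ⟨Sum.inl t, fun p => (ht p).le, fun p => rfl⟩
    have hm1i : m1 N.ini = 0 := by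
      simp [hm1, N.no_prod_ini, ht, WorkflowNet.iniM]
    have hback : N.shortCircuit.Reach m1 (N.iniM 1) :=
      hc m1 ((hm.trans hcyc).tail hstep)
    rcases N.ini_mono hback with h1 | ⟨m'', hr, hf⟩
    · rw [hm1i] at h1
      simp [WorkflowNet.iniM] at h1
    · refine ⟨m'', (hcyc.tail hstep).trans hr, fun p => ?_⟩
      simp only [WorkflowNet.shortCircuit]
      split
      · rename_i hp; rw [hp]; exact hf
      · exact Nat.zero_le _
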